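/- Let U ∈ ℂ^{n×n} be Hermitian, ĥ ∈ ℂⁿ, s ∈ ℝ, and η > 0. Then (ĥ+e)ᴴU(ĥ+e) ≥ s for every e ∈ ℂⁿ with ‖e‖ ≤ η if and only if there exists λ ≥ 0 such that the (n+1)×(n+1) Hermitian block matrix [[U + λI_n, Uĥ], [ĥᴴU, ĥᴴUĥ − s − λη²]] is positive semidefinite. -/

import Mathlib

open Matrix ComplexOrder

namespace SProcAux

variable {n : ℕ}

/-- real inner product -/
noncomputable def rip (x y : Fin n → ℂ) : ℝ := (star x ⬝ᵥ y).re

/-- squared norm -/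
noncomputable def Nq (x : Fin n → ℂ) : ℝ := rip x x

/-- quadratic form -/
noncomputable def qf (U : Matrix (Fin n) (Fin n) ℂ) (x : Fin n → ℂ) : ℝ :=
  (star x ⬝ᵥ U *ᵥ x).re

lemma star_dot (x y : Fin n → ℂ) : star (star x ⬝ᵥ y) = star y ⬝ᵥ x := by
  rw [star_dotProduct, star_star]

lemma rip_symm (x y : Fin n → ℂ) : rip x y = rip y x := by
  unfold rip
  rw [← star_dot x y]
  simp

lemma rip_add_right (x y z : Fin n → ℂ) : rip x (y + z) = rip x y + rip x z := by
  simp [rip, dotProduct_add]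

lemma rip_smul_right (x y : Fin n → ℂ) (c : ℂ) :
    rip x (c • y) = (c * (star x ⬝ᵥ y)).re := by
  simp [rip, dotProduct_smul, smul_eq_mul]

lemma rip_smul_right_real (x y : Fin n → ℂ) (c : ℝ) :
    rip x ((c : ℂ) • y) = c * rip x y := by
  rw [rip_smul_right]
  simp [rip, Complex.mul_re]

lemma rip_neg_left (x y : Fin n → ℂ) : rip (-x) y = -rip x y := by
  simp [rip, neg_dotProduct]

lemma Nq_eq_sum (x : Fin n → ℂ) : Nq x = ∑ i, ‖x i‖ ^ 2 := by
  unfold Nq rip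
  rw [dotProduct, Complex.re_sum]
  refine Finset.sum_congr rfl fun i _ => ?_
  simp [Pi.star_apply, Complex.mul_re, Complex.sq_norm,
    Complex.normSq_apply]

lemma Nq_nonneg (x : Fin n → ℂ) : 0 ≤ Nq x := by
  rw [Nq_eq_sum]; positivity

lemma Nq_eq_zero {x : Fin n → ℂ} (h : Nq x = 0) : x = 0 := by
  rw [Nq_eq_sum] at h
  funext i
  have : ‖x i‖ ^ 2 = 0 := by
    have := Finset.sum_eq_zero_iff_of_nonneg (fun j _ => by positivity) |>.mp h i
      (Finset.mem_univ i)
    exact this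
  simpa using this

lemma Nq_add (x y : Fin n → ℂ) : Nq (x + y) = Nq x + Nq y + 2 * rip x y := by
  unfold Nq
  rw [rip, star_add, add_dotProduct, dotProduct_add, dotProduct_add]
  have h1 : (star y ⬝ᵥ x).re = rip x y := by
    rw [← star_dot x y]; simp [rip]
  simp only [Complex.add_re]
  rw [show (star x ⬝ᵥ y).re = rip x y from rfl] at *
  rw [show (star x ⬝ᵥ x).re = rip x x from rfl, show (star y ⬝ᵥ y).re = rip y y from rfl]
  rw [h1]; ring

lemma Nq_smul (c : ℂ) (x : Fin n → ℂ) : Nq (c • x) = Complex.normSq c * Nq x := by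
  unfold Nq rip
  rw [star_smul, smul_dotProduct, dotProduct_smul]
  simp only [smul_eq_mul, ← mul_assoc]
  rw [show star c * c = ((Complex.normSq c : ℝ) : ℂ) by
    rw [Complex.star_def, mul_comm]; exact Complex.mul_conj c]
  simp [Complex.mul_re]

lemma herm_symm {U : Matrix (Fin n) (Fin n) ℂ} (hU : U.IsHermitian) (x y : Fin n → ℂ) :
    star (star x ⬝ᵥ U *ᵥ y) = star y ⬝ᵥ U *ᵥ x := by
  rw [star_dotProduct, star_star, star_mulVec, hU.eq, ← dotProduct_mulVec]

lemma cross_re_symm {U : Matrix (Fin n) (Fin n) ℂ} (hU : U.IsHermitian) (x y : Fin n → ℂ) :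
    (star x ⬝ᵥ U *ᵥ y).re = (star y ⬝ᵥ U *ᵥ x).re := by
  rw [← herm_symm hU x y]; simp

lemma quad_im {U : Matrix (Fin n) (Fin n) ℂ} (hU : U.IsHermitian) (x : Fin n → ℂ) :
    (star x ⬝ᵥ U *ᵥ x).im = 0 := by
  have := herm_symm hU x x
  rw [← Complex.conj_eq_iff_im]
  exact this

lemma qf_add {U : Matrix (Fin n) (Fin n) ℂ} (hU : U.IsHermitian) (x y : Fin n → ℂ) :
    qf U (x + y) = qf U x + qf U y + 2 * (star y ⬝ᵥ U *ᵥ x).re := by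
  unfold qf
  rw [star_add, mulVec_add]
  simp only [add_dotProduct, dotProduct_add, Complex.add_re]
  rw [cross_re_symm hU x y]
  ring

lemma qf_smul (U : Matrix (Fin n) (Fin n) ℂ) (c : ℂ) (x : Fin n → ℂ) :
    qf U (c • x) = Complex.normSq c * qf U x := by
  unfold qf
  rw [star_smul, smul_dotProduct, mulVec_smul, dotProduct_smul]
  simp only [smul_eq_mul, ← mul_assoc]
  rw [show star c * c = ((Complex.normSq c : ℝ) : ℂ) by
    rw [Complex.star_def, mul_comm]; exact Complex.mul_conj c]
  simp [Complex.mul_re]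

lemma qf_zero (U : Matrix (Fin n) (Fin n) ℂ) : qf U 0 = 0 := by
  simp [qf]

/-- epsilon lemma : if `C + Aε + Bε² ≥ 0` for all small positive ε, then `C ≥ 0`. -/
lemma eps_lemma (A B C δ : ℝ) (hδ : 0 < δ)
    (h : ∀ ε : ℝ, 0 < ε → ε ≤ δ → 0 ≤ C + A * ε + B * ε ^ 2) : 0 ≤ C := by
  by_contra hc
  push_neg at hc
  have hM0 : (0:ℝ) < |A| + |B| * δ + 1 := by positivity
  set ε := min δ (-C / (|A| + |B| * δ + 1)) with hε
  have hε0 : 0 < ε := lt_min hδ (div_pos (by linarith) hM0)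
  have hεδ : ε ≤ δ := min_le_left _ _
  have h2 := h ε hε0 hεδ
  have hεC : ε * (|A| + |B| * δ + 1) ≤ -C := by
    have h3 := min_le_right δ (-C / (|A| + |B| * δ + 1))
    calc ε * (|A| + |B| * δ + 1)
        ≤ (-C / (|A| + |B| * δ + 1)) * (|A| + |B| * δ + 1) :=
          mul_le_mul_of_nonneg_right h3 hM0.le
      _ = -C := by field_simp
  have hsq : ε ^ 2 ≤ δ * ε := by nlinarith
  nlinarith [mul_le_mul_of_nonneg_right (le_abs_self A) hε0.le,
    mul_le_mul_of_nonneg_left hsq (abs_nonneg B),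
    mul_le_mul_of_nonneg_right (le_abs_self B) (sq_nonneg ε)]

/-- one sided version: `At² + Bt ≥ 0` on `(0, δ]` implies `B ≥ 0`. -/
lemma one_sided (A B δ : ℝ) (hδ : 0 < δ)
    (h : ∀ t : ℝ, 0 < t → t ≤ δ → 0 ≤ A * t ^ 2 + B * t) : 0 ≤ B := by
  apply eps_lemma A 0 B δ hδ
  intro ε h0 hle
  have := h ε h0 hle
  nlinarith

/-- two sided version: `At² + Bt ≥ 0` on `[-δ, δ]` implies `B = 0` and `A ≥ 0`. -/
lemma two_sided (A B δ : ℝ) (hδ : 0 < δ)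
    (h : ∀ t : ℝ, |t| ≤ δ → 0 ≤ A * t ^ 2 + B * t) : B = 0 ∧ 0 ≤ A := by
  have h1 : 0 ≤ B := one_sided A B δ hδ fun t h0 hle =>
    h t (by rw [abs_of_pos h0]; exact hle)
  have h2 : 0 ≤ -B := by
    apply one_sided A (-B) δ hδ
    intro t h0 hle
    have := h (-t) (by rw [abs_neg, abs_of_pos h0]; exact hle)
    nlinarith
  have hB : B = 0 := le_antisymm (by linarith) h1
  refine ⟨hB, ?_⟩
  have h3 := h δ (by rw [abs_of_pos hδ])
  rw [hB] at h3
  nlinarith [mul_pos hδ hδ]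

lemma rip_neg_right (x y : Fin n → ℂ) : rip x (-y) = -rip x y := by
  simp [rip, dotProduct_neg]

lemma dot_self_im (x : Fin n → ℂ) : (star x ⬝ᵥ x).im = 0 := by
  have := star_dot x x
  rw [← Complex.conj_eq_iff_im]
  exact this

lemma qf_add_smul {U : Matrix (Fin n) (Fin n) ℂ} (hU : U.IsHermitian)
    (x v : Fin n → ℂ) (t : ℝ) :
    qf U (x + (t : ℂ) • v) =
      qf U x + t ^ 2 * qf U v + 2 * (t * (star v ⬝ᵥ U *ᵥ x).re) := by
  rw [qf_add hU x ((t : ℂ) • v), qf_smul, Complex.normSq_ofReal]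
  have h : star ((t : ℂ) • v) ⬝ᵥ U *ᵥ x = (t : ℂ) * (star v ⬝ᵥ U *ᵥ x) := by
    rw [star_smul, smul_dotProduct]
    simp [Complex.star_def, Complex.conj_ofReal, smul_eq_mul]
  rw [h, show ((t : ℂ) * (star v ⬝ᵥ U *ᵥ x)).re = t * (star v ⬝ᵥ U *ᵥ x).re by
    simp [Complex.mul_re]]
  ring

lemma Nq_add_smul (x v : Fin n → ℂ) (t : ℝ) :
    Nq (x + (t : ℂ) • v) = Nq x + t ^ 2 * Nq v + 2 * (t * rip x v) := by
  rw [Nq_add, Nq_smul, Complex.normSq_ofReal, rip_smul_right_real]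
  ring

lemma sqrt_le_iff' {S η : ℝ} (hS : 0 ≤ S) (hη : 0 ≤ η) :
    Real.sqrt S ≤ η ↔ S ≤ η ^ 2 := by
  constructor
  · intro h
    have h2 : Real.sqrt S ^ 2 ≤ η ^ 2 := pow_le_pow_left₀ (Real.sqrt_nonneg S) h 2
    rwa [Real.sq_sqrt hS] at h2
  · intro h
    calc Real.sqrt S ≤ Real.sqrt (η ^ 2) := Real.sqrt_le_sqrt h
      _ = η := Real.sqrt_sq hη

lemma exists_min (U : Matrix (Fin n) (Fin n) ℂ) (hhat : Fin n → ℂ) (η : ℝ) (hη : 0 < η) :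
    ∃ a : Fin n → ℂ, Nq a ≤ η ^ 2 ∧
      ∀ f : Fin n → ℂ, Nq f ≤ η ^ 2 → qf U (hhat + a) ≤ qf U (hhat + f) := by
  have hcont : Continuous fun v : Fin n → ℂ => qf U (hhat + v) := by
    unfold qf
    apply Complex.continuous_re.comp
    have h : (fun v : Fin n → ℂ => star (hhat + v) ⬝ᵥ U *ᵥ (hhat + v)) =
        fun v => ∑ i, star (hhat i + v i) * ∑ j, U i j * (hhat j + v j) := by
      funext v
      simp [dotProduct, mulVec, Pi.add_apply, Pi.star_apply]
    rw [h]
    refine continuous_finset_sum _ fun i _ => Continuous.mul ?_ ?_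
    · exact continuous_star.comp (continuous_const.add (continuous_apply i))
    · exact continuous_finset_sum _ fun j _ =>
        continuous_const.mul (continuous_const.add (continuous_apply j))
  let E := EuclideanSpace ℂ (Fin n)
  let φ : E → (Fin n → ℂ) := fun e => (WithLp.equiv 2 (Fin n → ℂ)) e
  have hφ : Continuous φ := by
    exact (PiLp.continuousLinearEquiv 2 ℂ (fun _ : Fin n => ℂ)).continuous
  have hnorm : ∀ x : E, ‖x‖ ≤ η ↔ Nq (φ x) ≤ η ^ 2 := by
    intro x
    rw [EuclideanSpace.norm_eq, show Nq (φ x) = ∑ i, ‖x i‖ ^ 2 from Nq_eq_sum _]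
    exact sqrt_le_iff' (by positivity) hη.le
  obtain ⟨a, haball, hamin⟩ := (isCompact_closedBall (0 : E) η).exists_isMinOn
    ⟨0, Metric.mem_closedBall_self hη.le⟩ ((hcont.comp hφ).continuousOn)
  refine ⟨φ a, (hnorm a).mp (mem_closedBall_zero_iff.mp haball), ?_⟩
  intro f hf
  have hfE : ((WithLp.equiv 2 (Fin n → ℂ)).symm f) ∈ Metric.closedBall (0 : E) η := by
    rw [mem_closedBall_zero_iff]
    apply (hnorm _).mpr
    have : φ ((WithLp.equiv 2 (Fin n → ℂ)).symm f) = f :=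
      (WithLp.equiv 2 (Fin n → ℂ)).apply_symm_apply f
    rw [this]; exact hf
  have h := isMinOn_iff.mp hamin _ hfE
  have : φ ((WithLp.equiv 2 (Fin n → ℂ)).symm f) = f :=
    (WithLp.equiv 2 (Fin n → ℂ)).apply_symm_apply f
  rw [Function.comp_apply, Function.comp_apply, this] at h
  exact h

lemma star_sum_elim (e : Fin n → ℂ) (t : Fin 1 → ℂ) :
    star (Sum.elim e t) = Sum.elim (star e) (star t) := by
  funext x; cases x <;> simp

lemma block_quad (U : Matrix (Fin n) (Fin n) ℂ) (hhat : Fin n → ℂ) (lam : ℝ) (d : ℂ)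
    (e : Fin n → ℂ) (t : Fin 1 → ℂ) :
    star (Sum.elim e t) ⬝ᵥ
      (Matrix.fromBlocks (U + (lam : ℂ) • (1 : Matrix (Fin n) (Fin n) ℂ))
        (Matrix.of fun (i : Fin n) (_ : Fin 1) => (U *ᵥ hhat) i)
        (Matrix.of fun (_ : Fin 1) (j : Fin n) => (star hhat ᵥ* U) j)
        (Matrix.of fun (_ : Fin 1) (_ : Fin 1) => d)) *ᵥ (Sum.elim e t)
    = (star e ⬝ᵥ U *ᵥ e + (lam : ℂ) * (star e ⬝ᵥ e))
      + t 0 * (star e ⬝ᵥ U *ᵥ hhat) + star (t 0) * (star hhat ⬝ᵥ U *ᵥ e)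
      + star (t 0) * t 0 * d := by
  rw [fromBlocks_mulVec, star_sum_elim, Sum.elim_comp_inl, Sum.elim_comp_inr,
    sumElim_dotProduct_sumElim, dotProduct_add, dotProduct_add]
  have hA : star e ⬝ᵥ (U + (lam : ℂ) • 1) *ᵥ e
      = star e ⬝ᵥ U *ᵥ e + (lam : ℂ) * (star e ⬝ᵥ e) := by
    rw [add_mulVec, dotProduct_add, smul_mulVec, one_mulVec, dotProduct_smul,
      smul_eq_mul]
  have hB : star e ⬝ᵥ ((Matrix.of fun (i : Fin n) (_ : Fin 1) => (U *ᵥ hhat) i) *ᵥ t)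
      = t 0 * (star e ⬝ᵥ (U *ᵥ hhat)) := by
    simp only [mulVec, dotProduct, Matrix.of_apply, Fin.sum_univ_one]
    rw [Finset.mul_sum]
    exact Finset.sum_congr rfl fun i _ => by ring
  have hFin1 : ∀ x : Fin 1 → ℂ, star t ⬝ᵥ x = star (t 0) * x 0 := by
    intro x; simp [dotProduct]
  have hC : star t ⬝ᵥ ((Matrix.of fun (_ : Fin 1) (j : Fin n) => (star hhat ᵥ* U) j) *ᵥ e)
      = star (t 0) * (star hhat ⬝ᵥ U *ᵥ e) := by
    rw [hFin1]
    congr 1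
    show (fun j => (star hhat ᵥ* U) j) ⬝ᵥ e = star hhat ⬝ᵥ U *ᵥ e
    rw [← dotProduct_mulVec]
  have hD : star t ⬝ᵥ ((Matrix.of fun (_ : Fin 1) (_ : Fin 1) => d) *ᵥ t)
      = star (t 0) * t 0 * d := by
    rw [hFin1]
    have : ((Matrix.of fun (_ : Fin 1) (_ : Fin 1) => d) *ᵥ t) 0 = d * t 0 := by
      simp [mulVec, dotProduct]
    rw [this]; ring
  rw [hA, hB, hC, hD]
  ring

lemma min_slope {U : Matrix (Fin n) (Fin n) ℂ} (hU : U.IsHermitian)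
    {hhat a : Fin n → ℂ} {η : ℝ}
    (hamin : ∀ f : Fin n → ℂ, Nq f ≤ η ^ 2 → qf U (hhat + a) ≤ qf U (hhat + f))
    (v : Fin n → ℂ) (t : ℝ) (hN : Nq (a + (t : ℂ) • v) ≤ η ^ 2) :
    0 ≤ qf U v * t ^ 2 + (2 * (star v ⬝ᵥ U *ᵥ (hhat + a)).re) * t := by
  have h := hamin _ hN
  rw [show hhat + (a + (t : ℂ) • v) = (hhat + a) + (t : ℂ) • v from by rw [add_assoc],
    qf_add_smul hU] at h
  linarith

lemma key (U : Matrix (Fin n) (Fin n) ℂ) (hU : U.IsHermitian) (hhat : Fin n → ℂ)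
    (s η : ℝ) (hη : 0 < η)
    (hyp : ∀ e : Fin n → ℂ, Nq e ≤ η ^ 2 → s ≤ qf U (hhat + e)) :
    ∃ lam : ℝ, 0 ≤ lam ∧ (∀ v, 0 ≤ qf U v + lam * Nq v) ∧
      (∀ f, 0 ≤ (qf U (hhat + f) - s) + lam * (Nq f - η ^ 2)) := by
  obtain ⟨a, haN, hamin⟩ := exists_min U hhat η hη
  set r : Fin n → ℂ := U *ᵥ (hhat + a) with hr
  have hripr : ∀ v, (star v ⬝ᵥ U *ᵥ (hhat + a)).re = rip v r := fun v => by rw [← hr]; rfl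
  have main : ∃ lam : ℝ, 0 ≤ lam ∧ r = ((-lam : ℝ) : ℂ) • a ∧
      lam * (Nq a - η ^ 2) = 0 ∧ ∀ v, 0 ≤ qf U v + lam * Nq v := by
    by_cases hb : Nq a = η ^ 2
    · -- boundary case
      have haa : rip a a = η ^ 2 := hb
      -- C1 : strict descent directions
      have hC1 : ∀ v, rip a v < 0 → 0 ≤ rip v r := by
        intro v hv
        set δ := (-2 * rip a v) / (Nq v + 1) with hδdef
        have hden : (0:ℝ) < Nq v + 1 := by have := Nq_nonneg v; linarith
        have hδ : 0 < δ := div_pos (by linarith) hden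
        have hslope : ∀ t : ℝ, 0 < t → t ≤ δ → 0 ≤ qf U v * t ^ 2 + (2 * rip v r) * t := by
          intro t ht0 htδ
          have hδeq : δ * (Nq v + 1) = -2 * rip a v := by
            rw [hδdef]; field_simp
          have hN : Nq (a + (t : ℂ) • v) ≤ η ^ 2 := by
            rw [Nq_add_smul, hb]
            nlinarith [Nq_nonneg v, mul_le_mul_of_nonneg_right htδ (Nq_nonneg v)]
          have := min_slope hU hamin v t hN
          rw [hripr] at this
          exact this
        have := one_sided (qf U v) (2 * rip v r) δ hδ hslope
        linarith
      -- C2 : weak descent directions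
      have hC2 : ∀ v, rip a v ≤ 0 → 0 ≤ rip v r := by
        intro v hv
        apply eps_lemma (-(rip a r)) 0 (rip v r) 1 one_pos
        intro ε hε0 hε1
        have h1 : rip a (v + ((-ε : ℝ) : ℂ) • a) < 0 := by
          rw [rip_add_right, rip_smul_right_real, haa]
          nlinarith [mul_pos hε0 (pow_pos hη 2)]
        have h2 := hC1 _ h1
        have h3 : rip (v + ((-ε : ℝ) : ℂ) • a) r = rip v r + (-ε) * rip a r := by
          rw [rip_symm, rip_add_right, rip_smul_right_real, rip_symm r v, rip_symm r a]
        rw [h3] at h2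
        nlinarith
      -- C3 : tangent directions
      have hC3 : ∀ v, rip a v = 0 → rip v r = 0 := by
        intro v hv
        have h1 := hC2 v hv.le
        have h2 := hC2 (-v) (by rw [rip_neg_right, hv, neg_zero])
        rw [rip_neg_left] at h2
        linarith
      set μ : ℝ := rip a r / η ^ 2 with hμ
      set w : Fin n → ℂ := r + ((-μ : ℝ) : ℂ) • a with hw
      have haw : rip a w = 0 := by
        rw [hw, rip_add_right, rip_smul_right_real, haa, hμ]
        field_simp
        ring
      have hwr : rip w r = 0 := hC3 w haw
      have hww : rip w w = 0 := by
        have h1 : rip w w = rip w r + (-μ) * rip w a := by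
          nth_rewrite 2 [hw]
          rw [rip_add_right, rip_smul_right_real]
        rw [h1, hwr, rip_symm w a, haw]
        ring
      have hw0 : w = 0 := Nq_eq_zero hww
      have hr_eq : r = ((μ : ℝ) : ℂ) • a := by
        have h1 : r = w + ((μ : ℝ) : ℂ) • a := by
          rw [hw, add_assoc, ← add_smul]
          norm_num
        rw [h1, hw0, zero_add]
      have hμ0 : μ ≤ 0 := by
        have h1 : rip a (-a) < 0 := by
          rw [rip_neg_right, haa]; nlinarith
        have h2 := hC1 (-a) h1
        rw [rip_neg_left] at h2
        rw [hμ]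
        apply div_nonpos_of_nonpos_of_nonneg (by linarith) (by positivity)
      refine ⟨-μ, by linarith, ?_, by rw [hb]; ring, ?_⟩
      · rw [hr_eq]; norm_num
      -- positivity of the shifted form
      have hC6 : ∀ w', 2 * rip a w' + Nq w' = 0 → 0 ≤ qf U w' + (-μ) * Nq w' := by
        intro w' hcond
        have hN : Nq (a + w') ≤ η ^ 2 := by
          rw [Nq_add, hb]; linarith
        have h := hamin _ hN
        rw [show hhat + (a + w') = (hhat + a) + w' from by rw [add_assoc],
          qf_add hU (hhat + a) w'] at h
        rw [hripr w'] at h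
        have h3 : rip w' r = μ * rip a w' := by
          rw [hr_eq, rip_smul_right_real, rip_symm]
        rw [h3] at h
        nlinarith
      have hPz : ∀ v, star a ⬝ᵥ v ≠ 0 → Nq v ≠ 0 → 0 ≤ qf U v + (-μ) * Nq v := by
        intro v hz hv0
        have hNv : 0 < Nq v := (Nq_nonneg v).lt_of_ne' hv0
        set S := Complex.normSq (star a ⬝ᵥ v) with hS
        have hSpos : 0 < S := Complex.normSq_pos.mpr hz
        set u : ℂ := -(((2 / Nq v : ℝ)) : ℂ) * star (star a ⬝ᵥ v) with hu
        have hnu : Complex.normSq u = (2 / Nq v) ^ 2 * S := by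
          rw [hu, hS, Complex.normSq_mul, Complex.normSq_neg, Complex.normSq_ofReal,
            Complex.star_def, Complex.normSq_conj]
          ring
        have hcond : 2 * rip a (u • v) + Nq (u • v) = 0 := by
          have h1 : rip a (u • v) = -(2 / Nq v) * S := by
            rw [rip_smul_right]
            have h2 : u * (star a ⬝ᵥ v) = ((-(2 / Nq v) * S : ℝ) : ℂ) := by
              rw [hu, hS]
              push_cast
              rw [show -((2 / Nq v : ℂ)) * star (star a ⬝ᵥ v) * (star a ⬝ᵥ v)
                  = -((2 / Nq v : ℂ)) * (star (star a ⬝ᵥ v) * (star a ⬝ᵥ v)) by ring]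
              rw [Complex.star_def, mul_comm ((starRingEnd ℂ) (star a ⬝ᵥ v)) _,
                Complex.mul_conj]
            rw [h2, Complex.ofReal_re]
          rw [h1, Nq_smul, hnu]
          field_simp
          ring
        have h := hC6 _ hcond
        rw [qf_smul, Nq_smul] at h
        have hfac : Complex.normSq u * qf U v + -μ * (Complex.normSq u * Nq v)
            = Complex.normSq u * (qf U v + (-μ) * Nq v) := by ring
        rw [hfac] at h
        have hupos : 0 < Complex.normSq u := by
          rw [hnu]
          have : 0 < (2 / Nq v) ^ 2 := by positivity
          positivity
        nlinarith
      intro v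
      by_cases hv0 : Nq v = 0
      · have hveq : v = 0 := Nq_eq_zero hv0
        rw [hveq, qf_zero]
        have hN0 : Nq (0 : Fin n → ℂ) = 0 := by simp [Nq_eq_sum]
        rw [hN0]; norm_num
      by_cases hz : star a ⬝ᵥ v = 0
      · apply eps_lemma (2 * ((star a ⬝ᵥ U *ᵥ v).re + (-μ) * rip v a))
          (qf U a + (-μ) * Nq a) (qf U v + (-μ) * Nq v) 1 one_pos
        intro ε hε0 hε1
        have hzε : star a ⬝ᵥ (v + ((ε : ℝ) : ℂ) • a) ≠ 0 := by
          rw [dotProduct_add, hz, zero_add, dotProduct_smul, smul_eq_mul]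
          intro hcontra
          have h1 : ((ε : ℂ) * (star a ⬝ᵥ a)).re = 0 := by rw [hcontra]; simp
          have h2 : ((ε : ℂ) * (star a ⬝ᵥ a)).re = ε * rip a a := by
            simp [Complex.mul_re, rip]
          rw [h2, haa] at h1
          nlinarith [mul_pos hε0 (pow_pos hη 2)]
        have hNε : Nq (v + ((ε : ℝ) : ℂ) • a) ≠ 0 := by
          intro hcontra
          exact hzε (by rw [Nq_eq_zero hcontra]; simp)
        have h := hPz _ hzε hNε
        rw [qf_add_smul hU, Nq_add_smul] at h
        have haa' : Nq a = η ^ 2 := hb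
        nlinarith [h]
      · exact hPz v hz hv0
    · -- interior case
      have hlt : Nq a < η ^ 2 := lt_of_le_of_ne haN hb
      have step : ∀ v, rip v r = 0 ∧ 0 ≤ qf U v := by
        intro v
        have hden : (0:ℝ) < Nq v + 2 * |rip a v| + 1 := by
          have := Nq_nonneg v
          positivity
        set δ := min 1 ((η ^ 2 - Nq a) / (Nq v + 2 * |rip a v| + 1)) with hδdef
        have hδ : 0 < δ := lt_min one_pos (div_pos (by linarith) hden)
        have hslope : ∀ t : ℝ, |t| ≤ δ → 0 ≤ qf U v * t ^ 2 + (2 * rip v r) * t := by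
          intro t ht
          have hδ1 : δ ≤ 1 := min_le_left _ _
          have hδ2 : δ * (Nq v + 2 * |rip a v| + 1) ≤ η ^ 2 - Nq a :=
            (le_div_iff₀ hden).mp (min_le_right _ _)
          have hN : Nq (a + (t : ℂ) • v) ≤ η ^ 2 := by
            rw [Nq_add_smul]
            have h3 : t ^ 2 ≤ δ := by nlinarith [le_abs_self t, neg_abs_le t, abs_nonneg t]
            have h4 : t * rip a v ≤ δ * |rip a v| := by
              calc t * rip a v ≤ |t * rip a v| := le_abs_self _
                _ = |t| * |rip a v| := abs_mul _ _
                _ ≤ δ * |rip a v| := mul_le_mul_of_nonneg_right ht (abs_nonneg _)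
            nlinarith [Nq_nonneg v, mul_le_mul_of_nonneg_right h3 (Nq_nonneg v)]
          have := min_slope hU hamin v t hN
          rw [hripr] at this
          exact this
        have h2 := two_sided (qf U v) (2 * rip v r) δ hδ hslope
        exact ⟨by linarith [h2.1], h2.2⟩
      have hr0 : r = 0 := Nq_eq_zero ((step r).1)
      refine ⟨0, le_refl 0, by rw [hr0]; norm_num, by ring, ?_⟩
      intro v
      have := (step v).2
      linarith
  obtain ⟨lam, hlam, hrla, hcompl, hP⟩ := main
  refine ⟨lam, hlam, hP, ?_⟩
  intro f
  have hfa : f = a + (f - a) := by abel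
  have hq : qf U (hhat + f) = qf U (hhat + a) + qf U (f - a)
      + 2 * ((-lam) * rip (f - a) a) := by
    conv_lhs => rw [hfa, show hhat + (a + (f - a)) = (hhat + a) + (f - a) from by
      rw [add_assoc]]
    rw [qf_add hU, hripr, hrla, rip_smul_right_real]
  have hNf : Nq f = Nq a + Nq (f - a) + 2 * rip a (f - a) := by
    conv_lhs => rw [hfa]
    rw [Nq_add]
  have h1 := hyp a haN
  have h2 := hP (f - a)
  have h3 : rip (f - a) a = rip a (f - a) := rip_symm _ _
  nlinarith [hcompl]

lemma re_main {U : Matrix (Fin n) (Fin n) ℂ} (hU : U.IsHermitian)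
    (hhat f : Fin n → ℂ) (lam s η : ℝ) :
    ((star f ⬝ᵥ U *ᵥ f + (lam : ℂ) * (star f ⬝ᵥ f)) + star f ⬝ᵥ U *ᵥ hhat
      + star hhat ⬝ᵥ U *ᵥ f
      + ((star hhat ⬝ᵥ U *ᵥ hhat) - (s : ℂ) - ((lam : ℂ) * (η : ℂ) ^ 2))).re
    = (qf U (hhat + f) - s) + lam * (Nq f - η ^ 2) := by
  rw [qf_add hU hhat f]
  simp only [Complex.add_re, Complex.sub_re, Complex.ofReal_re]
  have r2 : ((lam : ℂ) * (star f ⬝ᵥ f)).re = lam * ((star f ⬝ᵥ f).re) := by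
    simp [Complex.mul_re]
  have r4 : ((lam : ℂ) * (η : ℂ) ^ 2).re = lam * η ^ 2 := by
    rw [show (lam : ℂ) * (η : ℂ) ^ 2 = ((lam * η ^ 2 : ℝ) : ℂ) from by push_cast; ring,
      Complex.ofReal_re]
  rw [r2, r4, cross_re_symm hU hhat f]
  have n1 : (star f ⬝ᵥ f).re = Nq f := rfl
  have n2 : (star f ⬝ᵥ U *ᵥ f).re = qf U f := rfl
  have n3 : (star hhat ⬝ᵥ U *ᵥ hhat).re = qf U hhat := rfl
  rw [n1, n2, n3]
  ring

lemma im_main {U : Matrix (Fin n) (Fin n) ℂ} (hU : U.IsHermitian)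
    (hhat f : Fin n → ℂ) (lam s η : ℝ) :
    ((star f ⬝ᵥ U *ᵥ f + (lam : ℂ) * (star f ⬝ᵥ f)) + star f ⬝ᵥ U *ᵥ hhat
      + star hhat ⬝ᵥ U *ᵥ f
      + ((star hhat ⬝ᵥ U *ᵥ hhat) - (s : ℂ) - ((lam : ℂ) * (η : ℂ) ^ 2))).im = 0 := by
  simp only [Complex.add_im, Complex.sub_im, Complex.ofReal_im]
  rw [quad_im hU f, quad_im hU hhat]
  have i3 : (star hhat ⬝ᵥ U *ᵥ f).im = -((star f ⬝ᵥ U *ᵥ hhat).im) := by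
    rw [← herm_symm hU f hhat]; simp
  have i5 : ((lam : ℂ) * (star f ⬝ᵥ f)).im = 0 := by
    simp [Complex.mul_im, dot_self_im f]
  have i6 : ((lam : ℂ) * (η : ℂ) ^ 2).im = 0 := by
    rw [show (lam : ℂ) * (η : ℂ) ^ 2 = ((lam * η ^ 2 : ℝ) : ℂ) from by push_cast; ring,
      Complex.ofReal_im]
  rw [i3, i5, i6]
  ring

end SProcAux

open SProcAux in
theorem s_procedure
    (n : ℕ) (U : Matrix (Fin n) (Fin n) ℂ) (hU : U.IsHermitian)
    (hhat : Fin n → ℂ) (s η : ℝ) (hη : 0 < η) :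
    (∀ e : Fin n → ℂ, Real.sqrt (∑ i, ‖e i‖ ^ 2) ≤ η →
        s ≤ (star (hhat + e) ⬝ᵥ U.mulVec (hhat + e)).re) ↔
    (∃ lam : ℝ, 0 ≤ lam ∧
      (Matrix.fromBlocks
        (U + (lam : ℂ) • (1 : Matrix (Fin n) (Fin n) ℂ))
        (Matrix.of fun (i : Fin n) (_ : Fin 1) => U.mulVec hhat i)
        (Matrix.of fun (_ : Fin 1) (j : Fin n) => Matrix.vecMul (star hhat) U j)
        (Matrix.of fun (_ : Fin 1) (_ : Fin 1) =>
          (star hhat ⬝ᵥ U.mulVec hhat) - (s : ℂ) - ((lam : ℂ) * (η : ℂ) ^ 2))).PosSemidef) := by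
  constructor
  · intro hyp
    have hyp' : ∀ e : Fin n → ℂ, Nq e ≤ η ^ 2 → s ≤ qf U (hhat + e) := by
      intro e he
      exact hyp e (by
        rw [show (∑ i, ‖e i‖ ^ 2) = Nq e from (Nq_eq_sum e).symm]
        exact (sqrt_le_iff' (Nq_nonneg e) hη.le).mpr he)
    obtain ⟨lam, hlam, hP, hG⟩ := key U hU hhat s η hη hyp'
    refine ⟨lam, hlam, PosSemidef.of_dotProduct_mulVec_nonneg ?_ ?_⟩
    · -- Hermitian
      show _ᴴ = _
      rw [fromBlocks_conjTranspose]
      have hA : (U + (lam : ℂ) • (1 : Matrix (Fin n) (Fin n) ℂ))ᴴ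
          = U + (lam : ℂ) • 1 := by
        rw [conjTranspose_add, hU.eq, conjTranspose_smul, conjTranspose_one]
        congr 1
        simp [Complex.star_def, Complex.conj_ofReal]
      have hBC : (Matrix.of fun (i : Fin n) (_ : Fin 1) => U.mulVec hhat i)ᴴ
          = Matrix.of fun (_ : Fin 1) (j : Fin n) => Matrix.vecMul (star hhat) U j := by
        ext i j
        simp only [conjTranspose_apply, Matrix.of_apply]
        have h1 := congrFun (star_mulVec U hhat) j
        rw [hU.eq] at h1
        simpa using h1
      have hCB : (Matrix.of fun (_ : Fin 1) (j : Fin n) => Matrix.vecMul (star hhat) U j)ᴴ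
          = Matrix.of fun (i : Fin n) (_ : Fin 1) => U.mulVec hhat i := by
        rw [← hBC, conjTranspose_conjTranspose]
      have hD : (Matrix.of fun (_ : Fin 1) (_ : Fin 1) =>
          (star hhat ⬝ᵥ U.mulVec hhat) - (s : ℂ) - ((lam : ℂ) * (η : ℂ) ^ 2))ᴴ
          = Matrix.of fun (_ : Fin 1) (_ : Fin 1) =>
          (star hhat ⬝ᵥ U.mulVec hhat) - (s : ℂ) - ((lam : ℂ) * (η : ℂ) ^ 2) := by
        ext i j
        simp only [conjTranspose_apply, Matrix.of_apply, star_sub]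
        rw [herm_symm hU hhat hhat]
        simp [Complex.star_def, Complex.conj_ofReal, _root_.map_mul, map_pow]
      rw [hA, hBC, hCB, hD]
    · intro x
      rw [show x = Sum.elim (x ∘ Sum.inl) (x ∘ Sum.inr) from (Sum.elim_comp_inl_inr x).symm]
      set e := x ∘ Sum.inl with he
      set t := x ∘ Sum.inr with ht
      rw [block_quad]
      by_cases ht0 : t 0 = 0
      · rw [ht0]
        simp only [star_zero, zero_mul, mul_zero, add_zero]
        rw [Complex.le_def]
        constructor
        · simp only [Complex.add_re, Complex.zero_re]
          have h1 : (star e ⬝ᵥ U *ᵥ e).re = qf U e := rfl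
          have h2 : ((lam : ℂ) * (star e ⬝ᵥ e)).re = lam * Nq e := by
            simp only [Complex.mul_re, Complex.ofReal_re, Complex.ofReal_im, zero_mul,
              sub_zero]
            rfl
          rw [h1, h2]
          exact hP e
        · simp only [Complex.add_im, Complex.zero_im]
          rw [quad_im hU e]
          have h3 : ((lam : ℂ) * (star e ⬝ᵥ e)).im = 0 := by
            simp [Complex.mul_im, dot_self_im e]
          rw [h3]
          norm_num
      · set f := (t 0)⁻¹ • e with hf
        have he2 : e = t 0 • f := by
          rw [hf, smul_smul, mul_inv_cancel₀ ht0, one_smul]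
        rw [he2]
        have e1 : star (t 0 • f) ⬝ᵥ U *ᵥ (t 0 • f)
            = star (t 0) * t 0 * (star f ⬝ᵥ U *ᵥ f) := by
          rw [star_smul, smul_dotProduct, mulVec_smul, dotProduct_smul]
          simp only [smul_eq_mul]; ring
        have e2 : star (t 0 • f) ⬝ᵥ (t 0 • f) = star (t 0) * t 0 * (star f ⬝ᵥ f) := by
          rw [star_smul, smul_dotProduct, dotProduct_smul]
          simp only [smul_eq_mul]; ring
        have e3 : star (t 0 • f) ⬝ᵥ U *ᵥ hhat = star (t 0) * (star f ⬝ᵥ U *ᵥ hhat) := by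
          rw [star_smul, smul_dotProduct]; simp only [smul_eq_mul]
        have e4 : star hhat ⬝ᵥ U *ᵥ (t 0 • f) = t 0 * (star hhat ⬝ᵥ U *ᵥ f) := by
          rw [mulVec_smul, dotProduct_smul]; simp only [smul_eq_mul]
        set W : ℂ := (star f ⬝ᵥ U *ᵥ f + (lam : ℂ) * (star f ⬝ᵥ f)) + star f ⬝ᵥ U *ᵥ hhat
          + star hhat ⬝ᵥ U *ᵥ f
          + ((star hhat ⬝ᵥ U *ᵥ hhat) - (s : ℂ) - ((lam : ℂ) * (η : ℂ) ^ 2)) with hW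
        have hEq : (star (t 0 • f) ⬝ᵥ U *ᵥ (t 0 • f)
              + (lam : ℂ) * (star (t 0 • f) ⬝ᵥ (t 0 • f)))
            + t 0 * (star (t 0 • f) ⬝ᵥ U *ᵥ hhat)
            + star (t 0) * (star hhat ⬝ᵥ U *ᵥ (t 0 • f))
            + star (t 0) * t 0 * ((star hhat ⬝ᵥ U *ᵥ hhat) - (s : ℂ)
                - ((lam : ℂ) * (η : ℂ) ^ 2))
            = star (t 0) * t 0 * W := by
          rw [e1, e2, e3, e4, hW]; ring
        rw [hEq]
        have hWim : W.im = 0 := by rw [hW]; exact im_main hU hhat f lam s η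
        have hWre : 0 ≤ W.re := by
          rw [hW, re_main hU hhat f lam s η]
          exact hG f
        have hWeq : W = ((W.re : ℝ) : ℂ) := by
          apply Complex.ext
          · simp
          · simp [hWim]
        rw [hWeq, show star (t 0) * t 0 = ((Complex.normSq (t 0) : ℝ) : ℂ) from by
          rw [Complex.star_def, mul_comm, Complex.mul_conj], ← Complex.ofReal_mul]
        exact Complex.zero_le_real.mpr (mul_nonneg (Complex.normSq_nonneg _) hWre)
  · rintro ⟨lam, hlam, hpsd⟩
    intro e he
    have heN : Nq e ≤ η ^ 2 := by
      rw [show (∑ i, ‖e i‖ ^ 2) = Nq e from (Nq_eq_sum e).symm] at he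
      exact (sqrt_le_iff' (Nq_nonneg e) hη.le).mp he
    have h := hpsd.dotProduct_mulVec_nonneg (Sum.elim e (fun _ : Fin 1 => (1 : ℂ)))
    rw [block_quad] at h
    simp only [star_one, one_mul] at h
    rw [show (star e ⬝ᵥ U *ᵥ e + (lam : ℂ) * (star e ⬝ᵥ e)) + star e ⬝ᵥ U *ᵥ hhat
        + star hhat ⬝ᵥ U *ᵥ e
        + ((star hhat ⬝ᵥ U *ᵥ hhat) - (s : ℂ) - ((lam : ℂ) * (η : ℂ) ^ 2))
        = (star e ⬝ᵥ U *ᵥ e + (lam : ℂ) * (star e ⬝ᵥ e)) + star e ⬝ᵥ U *ᵥ hhat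
        + star hhat ⬝ᵥ U *ᵥ e
        + ((star hhat ⬝ᵥ U *ᵥ hhat) - (s : ℂ) - ((lam : ℂ) * (η : ℂ) ^ 2)) from rfl] at h
    have hre := (Complex.le_def.mp h).1
    simp only [Complex.zero_re] at hre
    rw [re_main hU hhat e lam s η] at hre
    have hmul : lam * (Nq e - η ^ 2) ≤ 0 :=
      mul_nonpos_of_nonneg_of_nonpos hlam (by linarith)
    show s ≤ qf U (hhat + e)
    linarith
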